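/- Let 𝕜 be a commutative ring, G a finite group, and n ≥ 1. The functionals f_{[P,g]} : V^{⊗k} → 𝕜, as [P,g] ranges over the equivalence classes of G-partitions of type (0;k) whose underlying partition has at most n parts, form a basis of the 𝕜-module of 𝕜[G_n]-module homomorphisms from V^{⊗k} to the trivial module 𝕜. -/

import Mathlib

/-!
Statement 11: the functionals `f_{[P,g]}`, as `[P,g]` ranges over the equivalence classes
of `G`-partitions of type `(0; k)` with at most `n` parts, form a basis of the `𝕜`-module
`Hom_{𝕜[G_n]}(V^{⊗k}, 𝕜)` of `𝕜[G_n]`-module homomorphisms into the trivial module.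
Equivalence classes are handled via a transversal: an index family `F` containing exactly
one representative of every class with at most `n` parts.  "Form a basis" is expressed as:
the family is linearly independent and spans exactly the submodule of `G_n`-equivariant
functionals.
-/

namespace GPC

variable (G : Type*) [Group G]

def wreathAut (n : ℕ) : Equiv.Perm (Fin n) →* MulAut (Fin n → G) where
  toFun π :=
    { toFun := fun g => g ∘ ⇑π⁻¹
      invFun := fun g => g ∘ ⇑π
      left_inv := fun g => by funext i; simp
      right_inv := fun g => by funext i; simp
      map_mul' := fun g h => rfl }
  map_one' := by ext g i; simp
  map_mul' := fun π σ => by ext g i; simp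

/-- The wreath product `G_n = Gⁿ ⋊ S_n`. -/
abbrev Wr (n : ℕ) := (Fin n → G) ⋊[wreathAut G n] Equiv.Perm (Fin n)

variable {G}

/-- Equivalence of `G`-partitions with the same underlying partition `P`
(a set partition is encoded as a `Setoid`, whose classes are the parts):
`(P, g) ∼ (P, g')` iff for every part there is `t ∈ G` with `g' = t * g` on that part. -/
def LabelEquiv {X : Type*} (P : Setoid X) (g g' : X → G) : Prop :=
  ∀ a : X, ∃ t : G, ∀ b : X, P a b → g' b = t * g b

/-- The number of parts of a set partition (encoded as a `Setoid`). -/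
noncomputable def numParts {X : Type*} (P : Setoid X) : ℕ := Nat.card (Quotient P)

variable (G) in
/-- The image of the basis vector `g e_i` of `V` under the action of `γ ∈ G_n`:
`(h π) · (g e_i) = h_{π i} g e_{π i}`. -/
def actBasis (n : ℕ) (γ : Wr G n) (p : G × Fin n) : G × Fin n :=
  (γ.left (γ.right p.2) * p.1, γ.right p.2)

variable (𝕜 : Type*) [CommRing 𝕜] (G) (n : ℕ)

/-- The diagonal action of `γ ∈ G_n` on `V^{⊗k}`, realized on the standard basis
of `V^{⊗k}` given by `k`-tuples of basis vectors of `V`. -/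
noncomputable def dAct (k : ℕ) (γ : Wr G n) :
    ((Fin k → G × Fin n) →₀ 𝕜) →ₗ[𝕜] ((Fin k → G × Fin n) →₀ 𝕜) :=
  Finsupp.lmapDomain 𝕜 𝕜 (fun v j => actBasis G n γ (v j))

variable [Fintype G]

variable {G}

/-- The set `O_{P,g}`. -/
def Oset (k : ℕ) (P : Setoid (Fin k)) (g : Fin k → G) : Set (Fin k → G × Fin n) :=
  {v | (∀ a b : Fin k, (v a).2 = (v b).2 ↔ P a b)
    ∧ ∀ a b : Fin k, P a b → (v a).1 * (g a)⁻¹ = (v b).1 * (g b)⁻¹}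

open scoped Classical in
/-- The functional `f_{[P,g]} : V^{⊗k} → 𝕜`, equal to `1` on basis vectors in `O_{P,g}`
and `0` on all other basis vectors. -/
noncomputable def fFun (k : ℕ) (P : Setoid (Fin k)) (g : Fin k → G) :
    ((Fin k → G × Fin n) →₀ 𝕜) →ₗ[𝕜] 𝕜 :=
  Finsupp.lift 𝕜 𝕜 _ fun v => if v ∈ Oset n k P g then (1 : 𝕜) else 0

variable (G)

/-- The `𝕜`-module `Hom_{𝕜[G_n]}(V^{⊗k}, 𝕜)` of homomorphisms of `𝕜[G_n]`-modules from
`V^{⊗k}` to the trivial module `𝕜`: those `𝕜`-linear functionals invariant under the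
action of `G_n`. -/
def invFunctionals (k : ℕ) : Submodule 𝕜 (((Fin k → G × Fin n) →₀ 𝕜) →ₗ[𝕜] 𝕜) where
  carrier := {f | ∀ (γ : Wr G n) (x : (Fin k → G × Fin n) →₀ 𝕜), f (dAct G 𝕜 n k γ x) = f x}
  add_mem' := by
    intro f g hf hg γ x
    simp [hf γ x, hg γ x]
  zero_mem' := by intro γ x; simp
  smul_mem' := by
    intro c f hf γ x
    simp [hf γ x]

section Aux
open scoped Classical
variable {G} {𝕜} {n}

lemma exists_perm_comp_aux {α β : Type*} [Fintype α] [Fintype β]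
    {f g : α → β} (hf : Function.Injective f) (hg : Function.Injective g) :
    ∃ π : Equiv.Perm β, ∀ a, π (f a) = g a := by
  have hc : Fintype.card (↥(Set.range f)ᶜ) = Fintype.card (↥(Set.range g)ᶜ) := by
    rw [Fintype.card_compl_set, Fintype.card_compl_set,
      Set.card_range_of_injective hf, Set.card_range_of_injective hg]
  let e1 := Equiv.ofInjective f hf
  let e2 := Equiv.ofInjective g hg
  let ec : ↥(Set.range f)ᶜ ≃ ↥(Set.range g)ᶜ := Fintype.equivOfCardEq hc
  refine ⟨((Equiv.Set.sumCompl (Set.range f)).symm.trans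
    ((Equiv.sumCongr (e1.symm.trans e2) ec).trans (Equiv.Set.sumCompl (Set.range g)))), ?_⟩
  intro a
  have h1 : (Equiv.Set.sumCompl (Set.range f)).symm (f a) = Sum.inl ⟨f a, ⟨a, rfl⟩⟩ :=
    Equiv.Set.sumCompl_symm_apply (s := Set.range f) (x := ⟨f a, ⟨a, rfl⟩⟩)
  have h2 : e1.symm ⟨f a, ⟨a, rfl⟩⟩ = a := by
    have : e1 a = ⟨f a, ⟨a, rfl⟩⟩ := by ext; simp [e1]
    rw [← this, Equiv.symm_apply_apply]
  simp [h1, h2, e2]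

lemma actBasis_one (p : G × Fin n) : actBasis G n 1 p = p := by
  simp [actBasis]

lemma actBasis_mul (γ γ' : Wr G n) (p : G × Fin n) :
    actBasis G n (γ * γ') p = actBasis G n γ (actBasis G n γ' p) := by
  simp [actBasis, wreathAut, mul_assoc]

lemma actBasis_inv_cancel (γ : Wr G n) (p : G × Fin n) :
    actBasis G n γ⁻¹ (actBasis G n γ p) = p := by
  rw [← actBasis_mul, inv_mul_cancel, actBasis_one]

lemma act_mem_Oset {k : ℕ} {P : Setoid (Fin k)} {g : Fin k → G} (γ : Wr G n)
    {v : Fin k → G × Fin n} (hv : v ∈ Oset n k P g) :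
    (fun j => actBasis G n γ (v j)) ∈ Oset n k P g := by
  obtain ⟨h1, h2⟩ := hv
  constructor
  · intro a b
    rw [← h1 a b]
    constructor
    · intro h
      exact γ.right.injective (by simpa [actBasis] using h)
    · intro h
      simp [actBasis, h]
  · intro a b hab
    have h2d : (v a).2 = (v b).2 := (h1 a b).2 hab
    simp only [actBasis]
    rw [mul_assoc, mul_assoc, h2 a b hab, h2d]

lemma act_mem_Oset_iff {k : ℕ} {P : Setoid (Fin k)} {g : Fin k → G} (γ : Wr G n)
    {v : Fin k → G × Fin n} :
    (fun j => actBasis G n γ (v j)) ∈ Oset n k P g ↔ v ∈ Oset n k P g := by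
  refine ⟨fun h => ?_, fun h => act_mem_Oset γ h⟩
  have := act_mem_Oset γ⁻¹ h
  simpa [actBasis_inv_cancel] using this

lemma fFun_single {k : ℕ} (P : Setoid (Fin k)) (g : Fin k → G)
    (v : Fin k → G × Fin n) (c : 𝕜) :
    fFun 𝕜 n k P g (Finsupp.single v c) = if v ∈ Oset n k P g then c else 0 := by
  simp only [fFun, Finsupp.lift_apply]
  rw [Finsupp.sum_single_index (by simp)]
  split <;> simp

lemma dAct_single {k : ℕ} (γ : Wr G n) (v : Fin k → G × Fin n) (c : 𝕜) :
    dAct G 𝕜 n k γ (Finsupp.single v c)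
      = Finsupp.single (fun j => actBasis G n γ (v j)) c := by
  simp [dAct, Finsupp.lmapDomain_apply, Finsupp.mapDomain_single]

lemma mem_invFunctionals_iff {k : ℕ} (f : ((Fin k → G × Fin n) →₀ 𝕜) →ₗ[𝕜] 𝕜) :
    f ∈ invFunctionals G 𝕜 n k
      ↔ ∀ (γ : Wr G n) (x : (Fin k → G × Fin n) →₀ 𝕜), f (dAct G 𝕜 n k γ x) = f x :=
  Iff.rfl

lemma fFun_mem_inv {k : ℕ} (P : Setoid (Fin k)) (g : Fin k → G) :
    fFun 𝕜 n k P g ∈ invFunctionals G 𝕜 n k := by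
  rw [mem_invFunctionals_iff]
  intro γ x
  induction x using Finsupp.induction_linear with
  | zero => simp
  | add f g hf hg => simp [map_add, hf, hg]
  | single v c =>
      rw [dAct_single, fFun_single, fFun_single]
      congr 1
      simp only [eq_iff_iff]
      exact act_mem_Oset_iff γ

lemma mem_Oset_self {k : ℕ} (v : Fin k → G × Fin n) :
    v ∈ Oset n k (Setoid.ker fun a => (v a).2) (fun a => (v a).1) :=
  ⟨fun _ _ => Iff.rfl, fun a b _ => by simp⟩

lemma numParts_ker_le {k : ℕ} (v : Fin k → G × Fin n) :
    numParts (Setoid.ker fun a => (v a).2) ≤ n := by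
  have hinj : Function.Injective
      (Quotient.lift (fun a => (v a).2)
        (fun a b h => h) : Quotient (Setoid.ker fun a => (v a).2) → Fin n) := by
    rintro ⟨a⟩ ⟨b⟩ h
    exact Quotient.sound h
  calc numParts (Setoid.ker fun a => (v a).2) ≤ Nat.card (Fin n) :=
        Nat.card_le_card_of_injective _ hinj
    _ = n := by simp

lemma mem_Oset_of_labelEquiv {k : ℕ} {P : Setoid (Fin k)} {g g' : Fin k → G}
    (hle : LabelEquiv P g g') {v : Fin k → G × Fin n}
    (hv : v ∈ Oset n k P g') : v ∈ Oset n k P g := by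
  refine ⟨hv.1, fun a b hab => ?_⟩
  obtain ⟨t, ht⟩ := hle a
  have hga : g' a = t * g a := ht a (P.refl a)
  have hgb : g' b = t * g b := ht b hab
  have e := hv.2 a b hab
  calc (v a).1 * (g a)⁻¹ = (v a).1 * (g' a)⁻¹ * t := by rw [hga]; group
    _ = (v b).1 * (g' b)⁻¹ * t := by rw [e]
    _ = (v b).1 * (g b)⁻¹ := by rw [hgb]; group

lemma Oset_eqv {k : ℕ} {P P' : Setoid (Fin k)} {g g' : Fin k → G}
    {v : Fin k → G × Fin n}
    (h : v ∈ Oset n k P g) (h' : v ∈ Oset n k P' g') :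
    P = P' ∧ LabelEquiv P g g' := by
  have hPP : P = P' := Setoid.ext fun a b => (h.1 a b).symm.trans (h'.1 a b)
  subst hPP
  refine ⟨rfl, fun a => ⟨g' a * (g a)⁻¹, fun b hab => ?_⟩⟩
  have e1 := h.2 a b hab
  have e2 := h'.2 a b hab
  have e3 : (v a).1 * (g a)⁻¹ * g b = (v a).1 * (g' a)⁻¹ * g' b := by
    rw [e1, e2]; group
  calc g' b = g' a * (v a).1⁻¹ * ((v a).1 * (g' a)⁻¹ * g' b) := by group
    _ = g' a * (v a).1⁻¹ * ((v a).1 * (g a)⁻¹ * g b) := by rw [← e3]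
    _ = g' a * (g a)⁻¹ * g b := by group

lemma Oset_nonempty {k : ℕ} (P : Setoid (Fin k)) (g : Fin k → G)
    (hP : numParts P ≤ n) : ∃ v, v ∈ Oset n k P g := by
  have hfin : Finite (Quotient P) := Quotient.finite _
  have := Fintype.ofFinite (Quotient P)
  have hemb : Nonempty (Quotient P ↪ Fin n) := by
    rw [Function.Embedding.nonempty_iff_card_le]
    simpa [numParts, Nat.card_eq_fintype_card] using hP
  obtain ⟨e⟩ := hemb
  refine ⟨fun a => (g a, e (Quotient.mk P a)), ⟨fun a b => ?_, fun a b hab => by simp⟩⟩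
  constructor
  · intro h
    exact Quotient.exact (e.injective h)
  · intro h
    exact congrArg (fun q => ((g a, e q) : G × Fin n).2) (Quotient.sound h)

lemma Oset_transitive {k : ℕ} {P : Setoid (Fin k)} {g : Fin k → G}
    {v v' : Fin k → G × Fin n} (hv : v ∈ Oset n k P g) (hv' : v' ∈ Oset n k P g) :
    ∃ γ : Wr G n, ∀ j, actBasis G n γ (v j) = v' j := by
  have hfin : Finite (Quotient P) := Quotient.finite _
  have := Fintype.ofFinite (Quotient P)
  -- the two injections
  let ι₁ : Quotient P → Fin n := Quotient.lift (fun a => (v a).2) (fun a b h => (hv.1 a b).2 h)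
  let ι₂ : Quotient P → Fin n := Quotient.lift (fun a => (v' a).2) (fun a b h => (hv'.1 a b).2 h)
  have hι₁ : Function.Injective ι₁ := by
    rintro ⟨a⟩ ⟨b⟩ h
    exact Quotient.sound ((hv.1 a b).1 h)
  have hι₂ : Function.Injective ι₂ := by
    rintro ⟨a⟩ ⟨b⟩ h
    exact Quotient.sound ((hv'.1 a b).1 h)
  obtain ⟨π, hπ⟩ := exists_perm_comp_aux hι₁ hι₂
  have hπ' : ∀ j, π ((v j).2) = (v' j).2 := fun j => hπ (Quotient.mk P j)
  -- the labels
  set h : Fin n → G := fun m =>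
    if hm : ∃ a, (v' a).2 = m then (v' hm.choose).1 * (v hm.choose).1⁻¹ else 1 with hdef
  have hkey : ∀ j, h ((v' j).2) = (v' j).1 * (v j).1⁻¹ := by
    intro j
    have hex : ∃ a, (v' a).2 = (v' j).2 := ⟨j, rfl⟩
    rw [hdef]
    simp only [dif_pos hex]
    have ha : (v' hex.choose).2 = (v' j).2 := hex.choose_spec
    have hab : P hex.choose j := (hv'.1 hex.choose j).1 ha
    have e1 := hv'.2 hex.choose j hab
    have e2 := hv.2 hex.choose j hab
    have : (v' hex.choose).1 * (v hex.choose).1⁻¹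
        = ((v' hex.choose).1 * (g hex.choose)⁻¹) * ((v hex.choose).1 * (g hex.choose)⁻¹)⁻¹ := by
      group
    rw [this, e1, e2]
    group
  refine ⟨⟨h, π⟩, fun j => ?_⟩
  have : actBasis G n ⟨h, π⟩ (v j) = (h (π (v j).2) * (v j).1, π (v j).2) := rfl
  rw [this, hπ' j, hkey j]
  ext <;> simp

end Aux
set_option maxHeartbeats 1000000 in

theorem fFun_basis (𝕜 : Type*) [CommRing 𝕜]
    (G : Type*) [Group G] [Fintype G] (n : ℕ) (hn : 1 ≤ n) (k : ℕ)
    (ι : Type*) (F : ι → Setoid (Fin k) × (Fin k → G))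
    -- `F` is a transversal of the equivalence classes with at most `n` parts:
    (hparts : ∀ i, numParts (F i).1 ≤ n)
    (hcover : ∀ (P : Setoid (Fin k)) (g : Fin k → G), numParts P ≤ n →
      ∃ i, (F i).1 = P ∧ LabelEquiv P (F i).2 g)
    (hinj : ∀ i j, (F i).1 = (F j).1 → LabelEquiv (F i).1 (F i).2 (F j).2 → i = j) :
    LinearIndependent 𝕜 (fun i => fFun 𝕜 n k (F i).1 (F i).2)
    ∧ Submodule.span 𝕜 (Set.range fun i => fFun 𝕜 n k (F i).1 (F i).2)
        = invFunctionals G 𝕜 n k := by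
  classical
  have hW : ∀ i, ∃ v, v ∈ Oset n k (F i).1 (F i).2 := fun i =>
    Oset_nonempty (F i).1 (F i).2 (hparts i)
  choose w hw using hW
  have hdisj : ∀ i j, w i ∈ Oset n k (F j).1 (F j).2 → j = i := fun i j hmem =>
    hinj j i (Oset_eqv hmem (hw i)).1 (Oset_eqv hmem (hw i)).2
  have huniq : ∀ (v : Fin k → G × Fin n), ∃ i, v ∈ Oset n k (F i).1 (F i).2 ∧
      ∀ j, v ∈ Oset n k (F j).1 (F j).2 → j = i := by
    intro v
    obtain ⟨i, hPi, hle⟩ := hcover (Setoid.ker fun a => (v a).2) (fun a => (v a).1)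
      (numParts_ker_le v)
    have hvmem : v ∈ Oset n k (F i).1 (F i).2 := by
      rw [hPi]
      exact mem_Oset_of_labelEquiv hle (mem_Oset_self v)
    exact ⟨i, hvmem, fun j hj => hinj j i (Oset_eqv hj hvmem).1 (Oset_eqv hj hvmem).2⟩
  have hSfin : Finite (Setoid (Fin k)) := by
    have hr : Function.Injective (fun P : Setoid (Fin k) => P.r) := fun P Q h =>
      Setoid.ext fun a b => iff_of_eq (congrFun (congrFun h a) b)
    exact Finite.of_injective _ hr
  have hFinj : Function.Injective F := by
    intro i j hij
    apply hinj i j (congrArg Prod.fst hij)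
    rw [hij]
    exact fun a => ⟨1, fun b _ => (one_mul _).symm⟩
  have hιfin : Finite ι := Finite.of_injective F hFinj
  have hιF : Fintype ι := Fintype.ofFinite ι
  constructor
  · rw [Fintype.linearIndependent_iff]
    intro c hc i
    have hev := congrArg (fun f : ((Fin k → G × Fin n) →₀ 𝕜) →ₗ[𝕜] 𝕜 =>
      f (Finsupp.single (w i) 1)) hc
    simp only [LinearMap.coe_sum, Finset.sum_apply, LinearMap.smul_apply, fFun_single,
      smul_eq_mul, mul_ite, mul_one, mul_zero, LinearMap.zero_apply] at hev
    rw [Finset.sum_eq_single i] at hev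
    · rwa [if_pos (hw i)] at hev
    · intro j _ hji
      rw [if_neg (fun hmem => hji (hdisj i j hmem))]
    · intro h
      exact absurd (Finset.mem_univ i) h
  · apply le_antisymm
    · rw [Submodule.span_le]
      rintro _ ⟨i, rfl⟩
      exact fFun_mem_inv (F i).1 (F i).2
    · intro f hf
      rw [mem_invFunctionals_iff] at hf
      have feq : f = ∑ i, f (Finsupp.single (w i) 1) • fFun 𝕜 n k (F i).1 (F i).2 := by
        apply Finsupp.lhom_ext
        intro v c
        obtain ⟨i₀, hmem, huq⟩ := huniq v
        have horb : f (Finsupp.single v (1:𝕜)) = f (Finsupp.single (w i₀) 1) := by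
          obtain ⟨γ, hγ⟩ := Oset_transitive (hw i₀) hmem
          have hinv := hf γ (Finsupp.single (w i₀) 1)
          rw [dAct_single] at hinv
          have he : (fun j => actBasis G n γ (w i₀ j)) = v := funext hγ
          rw [he] at hinv
          exact hinv
        have hL : f (Finsupp.single v c) = f (Finsupp.single (w i₀) 1) * c := by
          have hs : Finsupp.single v c = c • Finsupp.single v (1:𝕜) := by
            rw [Finsupp.smul_single, smul_eq_mul, mul_one]
          rw [hs, map_smul, horb, smul_eq_mul, mul_comm]
        rw [hL]
        simp only [LinearMap.coe_sum, Finset.sum_apply, LinearMap.smul_apply, fFun_single,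
          smul_eq_mul, mul_ite, mul_zero]
        rw [Finset.sum_eq_single i₀]
        · rw [if_pos hmem]
        · intro j _ hj
          rw [if_neg (fun hmemj => hj (huq j hmemj))]
        · intro h
          exact absurd (Finset.mem_univ i₀) h
      rw [feq]
      exact Submodule.sum_mem _ fun i _ => Submodule.smul_mem _ _
        (Submodule.subset_span ⟨i, rfl⟩)

end GPC
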